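/- Let T be a third order divergence-free source form, and let H^{ab;c₁c₂,i₁i₂} denote the second order Helmholtz components of T. Then for all indices: ∂^{d₁d₂,j₁j₂j₃j₄} H^{ab;c₁c₂,i₁i₂} = 3 Sym_{(j₁,j₂,j₃,j₄)} ∂^{d₁d₂,j₂j₃j₄} ∂^{ab,c₁c₂j₁} T^{i₁i₂}, where Sym_{(j₁,j₂,j₃,j₄)} denotes symmetrization over the four indices j₁, j₂, j₃, j₄. -/

import Mathlib

open scoped BigOperators

namespace JetMetric

/-- Unordered multi-indices: multisets of coordinate indices. -/
abbrev MIdx (m : ℕ) := Multiset (Fin m)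

/-- The (infinite) jet space of metrics on ℝ^m: base coordinates `x^i` together with
all derivative coordinates `g_{ab,I}`. -/
abbrev Jet (m : ℕ) := (Fin m → ℝ) × (Fin m → Fin m → MIdx m → ℝ)

/-- The zeroth order coordinates `g_{ab}` as a matrix. -/
noncomputable def gMat {m : ℕ} (z : Jet m) : Matrix (Fin m) (Fin m) ℝ :=
  Matrix.of fun a b => z.2 a b 0

/-- The domain of interest: symmetric jets with nondegenerate metric. -/
def JetDom (m : ℕ) : Set (Jet m) :=
  {z | (∀ a b I, z.2 a b I = z.2 b a I) ∧ (gMat z).det ≠ 0}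

/-- The symmetrized pair delta `δ^a_{(c} δ^b_{d)}`. -/
noncomputable def pairWt {m : ℕ} (a b c d : Fin m) : ℝ :=
  ((if a = c ∧ b = d then (1 : ℝ) else 0) + (if a = d ∧ b = c then (1 : ℝ) else 0)) / 2

/-- The symmetrized multi-index delta `δ^{(i₁}_{j₁} ⋯ δ^{i_k)}_{j_k}` for unordered
multi-indices `I`, `J`. -/
noncomputable def idxWt {m : ℕ} (I J : MIdx m) : ℝ :=
  if I = J then
    (∏ s ∈ I.toFinset, (Nat.factorial (I.count s) : ℝ)) /
      (Nat.factorial (Multiset.card I) : ℝ)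
  else 0

/-- The weighted partial derivative operator `∂^{ab,I}`, realized as the directional
derivative along the symmetrized coordinate direction determined by
`∂^{ab,I} g_{cd,J} = δ^a_{(c} δ^b_{d)} δ^{(i₁}_{j₁} ⋯ δ^{i_k)}_{j_k}`. -/
noncomputable def pd {m : ℕ} (a b : Fin m) (I : MIdx m) (F : Jet m → ℝ) : Jet m → ℝ :=
  fun z => deriv (fun t : ℝ =>
    F (z.1, fun c d J => z.2 c d J + t * (pairWt a b c d * idxWt I J))) 0

/-- The partial derivative `∂/∂x^i` in a base coordinate. -/
noncomputable def xpd {m : ℕ} (i : Fin m) (F : Jet m → ℝ) : Jet m → ℝ :=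
  fun z => deriv (fun t : ℝ => F (Function.update z.1 i (z.1 i + t), z.2)) 0

/-- The partial derivative `∂/∂x^i` of a function on the base `ℝ^m`. -/
noncomputable def vpd {m : ℕ} (i : Fin m) (f : (Fin m → ℝ) → ℝ) : (Fin m → ℝ) → ℝ :=
  fun x => deriv (fun t : ℝ => f (Function.update x i (x i + t))) 0

/-- The total derivative operator
`D_i = ∂/∂x^i + Σ_{|I| ≥ 0} g_{ab,Ii} ∂^{ab,I}`, the Einstein sum running over all
ordered multi-indices `I` (lists) and all `a`, `b`. -/
noncomputable def Dt {m : ℕ} (i : Fin m) (F : Jet m → ℝ) : Jet m → ℝ :=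
  fun z => xpd i F z +
    ∑' l : List (Fin m), ∑ a : Fin m, ∑ b : Fin m,
      z.2 a b ((l : MIdx m) + {i}) * pd a b (l : MIdx m) F z

/-- The iterated total derivative `D_I = D_{i₁} ⋯ D_{i_k}` along an ordered multi-index. -/
noncomputable def DtL {m : ℕ} (l : List (Fin m)) (F : Jet m → ℝ) : Jet m → ℝ :=
  l.foldr Dt F

/-- The higher Euler–Lagrange operators
`E^{ab,I}(F) = Σ_{|J| ≥ 0} binom(|I|+|J|,|I|) (−D)_J (∂^{ab,IJ} F)`, the sum running over
all ordered multi-indices `J`. -/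
noncomputable def hEL {m : ℕ} (a b : Fin m) (I : MIdx m) (F : Jet m → ℝ) : Jet m → ℝ :=
  fun z => ∑' J : List (Fin m),
    (Nat.choose (Multiset.card I + J.length) (Multiset.card I) : ℝ) * (-1 : ℝ) ^ J.length *
      DtL J (pd a b (I + (J : MIdx m)) F) z

/-- The Euler–Lagrange operator `E^{ab}(L) = Σ_{|I| ≥ 0} (−D)_I (∂^{ab,I} L)`. -/
noncomputable def EL {m : ℕ} (a b : Fin m) (F : Jet m → ℝ) : Jet m → ℝ := hEL a b 0 F

/-- The Helmholtz components `H^{ab;cd,I} = ∂^{cd,I} T^{ab} − (−1)^{|I|} E^{ab,I}(T^{cd})`. -/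
noncomputable def Helm {m : ℕ} (T : Fin m → Fin m → Jet m → ℝ) (a b c d : Fin m)
    (I : MIdx m) : Jet m → ℝ :=
  fun z => pd c d I (T a b) z - (-1 : ℝ) ^ (Multiset.card I) * hEL a b I (T c d) z

/-- Truncated jet coordinates of order ≤ k (derivative slots labelled by ordered tuples). -/
abbrev Trunc (m k : ℕ) :=
  (Fin m → ℝ) × (Fin m → Fin m → (j : Fin (k + 1)) → ((Fin (j : ℕ) → Fin m) → ℝ))

/-- Projection from the jet space onto the truncated coordinates. -/
noncomputable def truncProj (m k : ℕ) (z : Jet m) : Trunc m k :=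
  (z.1, fun a b _j p => z.2 a b ((List.ofFn p : List (Fin m)) : MIdx m))

/-- The nondegeneracy domain in the truncated coordinates. -/
def truncDom (m k : ℕ) : Set (Trunc m k) :=
  {w | (Matrix.of fun a b => w.2 a b ⟨0, Nat.succ_pos k⟩ (fun i => i.elim0)).det ≠ 0}

/-- `F` is a differential function of order `k`: on the domain where `det g ≠ 0` it is a
smooth function of the variables `x^i` and `g_{ab,I}` with `|I| ≤ k` only. -/
def IsDF (m k : ℕ) (F : Jet m → ℝ) : Prop :=
  ∃ f : Trunc m k → ℝ, ContDiffOn ℝ (⊤ : ℕ∞) f (truncDom m k) ∧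
    ∀ z, F z = f (truncProj m k z)

/-- A source form of order `k`: symmetric components `T^{ab} = T^{(ab)}`, each a
differential function of order `k`. -/
structure SourceForm (m k : ℕ) where
  T : Fin m → Fin m → Jet m → ℝ
  symm : ∀ a b, T a b = T b a
  order : ∀ a b, IsDF m k (T a b)

/-- The inverse metric `g^{ab}`. -/
noncomputable def ginv {m : ℕ} (z : Jet m) : Matrix (Fin m) (Fin m) ℝ := (gMat z)⁻¹

/-- The Christoffel symbols `Γ^a_{bc} = ½ g^{ad}(g_{db,c} + g_{dc,b} − g_{bc,d})`. -/
noncomputable def Gamma {m : ℕ} (a b c : Fin m) (z : Jet m) : ℝ :=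
  (1 / 2) * ∑ d, ginv z a d * (z.2 d b {c} + z.2 d c {b} - z.2 b c {d})

/-- `T` is divergence-free: `D_b T^{ab} + Γ^a_{bc} T^{bc} = 0` identically. -/
def DivFree {m k : ℕ} (S : SourceForm m k) : Prop :=
  ∀ a, ∀ z ∈ JetDom m,
    (∑ b, Dt b (S.T a b) z) + (∑ b, ∑ c, Gamma a b c z * S.T b c z) = 0

/-- Evolutionary components `X_{ev,ab} = Q_{ab} − P^c g_{ab,c}` of a projectable
vector field `X = P^i ∂/∂x^i + Q_{ab} ∂^{ab}`. -/
noncomputable def Xev {m : ℕ} (P : Fin m → (Fin m → ℝ) → ℝ) (Q : Fin m → Fin m → Jet m → ℝ)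
    (a b : Fin m) : Jet m → ℝ :=
  fun z => Q a b z - ∑ c, P c z.1 * z.2 a b {c}

/-- The prolongation `pr X = P^i D_i + Σ_{|I| ≥ 0} D_I(X_{ev,ab}) ∂^{ab,I}` of a
projectable vector field, acting on differential functions. -/
noncomputable def prX {m : ℕ} (P : Fin m → (Fin m → ℝ) → ℝ) (Q : Fin m → Fin m → Jet m → ℝ)
    (F : Jet m → ℝ) : Jet m → ℝ :=
  fun z => (∑ i, P i z.1 * Dt i F z) +
    ∑' l : List (Fin m), ∑ a, ∑ b, DtL l (Xev P Q a b) z * pd a b (l : MIdx m) F z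

/-- The components of the Lie derivative of a source form along the prolongation of a
projectable vector field:
`(ℒ_X T)^{ab} = pr X(T^{ab}) + T^{cd} ∂^{ab,∅} Q_{cd} + (∂P^j/∂x^j) T^{ab}`. -/
noncomputable def LieT {m : ℕ} (P : Fin m → (Fin m → ℝ) → ℝ) (Q : Fin m → Fin m → Jet m → ℝ)
    (T : Fin m → Fin m → Jet m → ℝ) (a b : Fin m) : Jet m → ℝ :=
  fun z => prX P Q (T a b) z + (∑ c, ∑ d, T c d z * pd a b 0 (Q c d) z)
    + (∑ j, vpd j (P j) z.1) * T a b z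

/-- The `∂^{ab}`-components `Q_{ab} = −2 ξ^c_{,(a} g_{b)c}` of the lift `X_ξ` of a vector
field `ξ` on `ℝ^m` to the bundle of metrics. -/
noncomputable def liftQ {m : ℕ} (ξ : Fin m → (Fin m → ℝ) → ℝ) (a b : Fin m) : Jet m → ℝ :=
  fun z => -∑ c, (vpd a (ξ c) z.1 * z.2 b c 0 + vpd b (ξ c) z.1 * z.2 a c 0)

/-- `T` is natural: `pr X_ξ(T^{ab}) − 2 ξ^{(a}_{,c} T^{b)c} + ξ^c_{,c} T^{ab} = 0`
identically, for every smooth vector field `ξ` on `ℝ^m`. -/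
def Natural {m k : ℕ} (S : SourceForm m k) : Prop :=
  ∀ ξ : Fin m → (Fin m → ℝ) → ℝ, (∀ c, ContDiff ℝ (⊤ : ℕ∞) (ξ c)) →
    ∀ a b, ∀ z ∈ JetDom m,
      prX ξ (liftQ ξ) (S.T a b) z
        - ((∑ c, vpd c (ξ a) z.1 * S.T b c z) + (∑ c, vpd c (ξ b) z.1 * S.T a c z))
        + (∑ c, vpd c (ξ c) z.1) * S.T a b z = 0

/-- `T` admits translational conservation laws: `E^{hk}(g_{ab,p} T^{ab}) = 0` identically. -/
def TranslCL {m k : ℕ} (S : SourceForm m k) : Prop :=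
  ∀ p h k', ∀ z ∈ JetDom m,
    EL h k' (fun w => ∑ a, ∑ b, w.2 a b {p} * S.T a b w) z = 0

/-- `T` is locally variational: all Helmholtz components vanish identically. -/
def LocallyVariational {m k : ℕ} (S : SourceForm m k) : Prop :=
  ∀ a b c d (I : MIdx m), ∀ z ∈ JetDom m, Helm S.T a b c d I z = 0

/-- `F` has no explicit dependence on the base coordinates `x^i`. -/
def NoExplicitX {m : ℕ} (F : Jet m → ℝ) : Prop :=
  ∀ x x' g, F (x, g) = F (x', g)


section Aux

variable {m : ℕ}

/-- Perturbed jet point along the `∂^{pq,K}` coordinate direction. -/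
noncomputable def zt (z : Jet m) (p q : Fin m) (K : MIdx m) (t : ℝ) : Jet m :=
  (z.1, fun c d J => z.2 c d J + t * (pairWt p q c d * idxWt K J))

lemma pd_eq_deriv (p q : Fin m) (K : MIdx m) (F : Jet m → ℝ) (z : Jet m) :
    pd p q K F z = deriv (fun t => F (zt z p q K t)) 0 := rfl

/-- The corresponding direction in truncated coordinates. -/
noncomputable def dirW (p q : Fin m) (K : MIdx m) : Trunc m 3 :=
  (0, fun c d _j pl => pairWt p q c d * idxWt K (↑(List.ofFn pl)))

lemma idxWt_eq_zero_of_card_ne {I J : MIdx m} (h : Multiset.card I ≠ Multiset.card J) :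
    idxWt I J = 0 := by
  rw [idxWt, if_neg]
  intro h'; exact h (by rw [h'])

lemma truncProj_zt (z : Jet m) (p q : Fin m) (K : MIdx m) (t : ℝ) :
    truncProj m 3 (zt z p q K t) = truncProj m 3 z + t • dirW p q K := by
  apply Prod.ext
  · simp [truncProj, zt, dirW]
  · funext c d j pl
    simp [truncProj, zt, dirW]

lemma dirW_eq_zero (p q : Fin m) {K : MIdx m} (hK : 4 ≤ Multiset.card K) :
    dirW p q K = (0 : Trunc m 3) := by
  apply Prod.ext
  · rfl
  · funext c d j pl
    have : idxWt K (↑(List.ofFn pl)) = 0 := by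
      apply idxWt_eq_zero_of_card_ne
      rw [Multiset.coe_card, List.length_ofFn]
      omega
    simp [dirW, this]

/-- Directional derivative on the truncated coordinates. -/
noncomputable def fD (f : Trunc m 3 → ℝ) (w : Trunc m 3) : Trunc m 3 → ℝ :=
  fun y => deriv (fun t : ℝ => f (y + t • w)) 0

lemma pd_comp {F : Jet m → ℝ} {f : Trunc m 3 → ℝ} (hF : ∀ z, F z = f (truncProj m 3 z))
    (p q : Fin m) (K : MIdx m) (z : Jet m) :
    pd p q K F z = fD f (dirW p q K) (truncProj m 3 z) := by
  rw [pd_eq_deriv, fD]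
  congr 1
  funext t
  rw [hF, truncProj_zt]

lemma pd_vanish {F : Jet m → ℝ} {f : Trunc m 3 → ℝ} (hF : ∀ z, F z = f (truncProj m 3 z))
    (p q : Fin m) {K : MIdx m} (hK : 4 ≤ Multiset.card K) (z : Jet m) :
    pd p q K F z = 0 := by
  rw [pd_comp hF, fD, dirW_eq_zero p q hK]
  simp

end Aux

section Smooth

variable {m : ℕ}

lemma isOpen_truncDom : IsOpen (truncDom m 3) := by
  have hc : Continuous fun w : Trunc m 3 =>
      (Matrix.of fun a b => w.2 a b ⟨0, Nat.succ_pos 3⟩ (fun i => i.elim0)).det := by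
    apply Continuous.matrix_det
    apply continuous_matrix
    intro a b
    simp only [Matrix.of_apply]
    exact (continuous_apply _).comp ((continuous_apply _).comp ((continuous_apply b).comp
      ((continuous_apply a).comp continuous_snd)))
  exact isOpen_compl_singleton.preimage hc

lemma truncProj_mem {z : Jet m} (hz : z ∈ JetDom m) : truncProj m 3 z ∈ truncDom m 3 := by
  have : (Matrix.of fun a b => (truncProj m 3 z).2 a b ⟨0, Nat.succ_pos 3⟩ (fun i => i.elim0))
      = gMat z := by
    ext a b
    simp [truncProj, gMat]
  rw [truncDom, Set.mem_setOf_eq, this]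
  exact hz.2

lemma idxWt_zero_right {K : MIdx m} (hK : 1 ≤ Multiset.card K) : idxWt K 0 = 0 :=
  idxWt_eq_zero_of_card_ne (by rw [Multiset.card_zero]; omega)

lemma line_mem_truncDom {y : Trunc m 3} (hy : y ∈ truncDom m 3) (p q : Fin m) {K : MIdx m}
    (hK : 1 ≤ Multiset.card K) (t : ℝ) : y + t • dirW p q K ∈ truncDom m 3 := by
  have : (Matrix.of fun a b => (y + t • dirW p q K).2 a b ⟨0, Nat.succ_pos 3⟩ (fun i => i.elim0))
      = (Matrix.of fun a b => y.2 a b ⟨0, Nat.succ_pos 3⟩ (fun i => i.elim0)) := by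
    ext a b
    have h0 : ((List.ofFn (fun i : Fin ((0:ℕ)) => (i.elim0 : Fin m))) : MIdx m) = 0 := by simp
    simp [dirW, h0, idxWt_zero_right hK]
  rw [truncDom, Set.mem_setOf_eq, this]
  exact hy

lemma hasDerivAt_line (y w : Trunc m 3) (t : ℝ) :
    HasDerivAt (fun s : ℝ => y + s • w) w t := by
  simpa using ((hasDerivAt_id t).smul_const w).const_add y

lemma diffAt_of_contDiffOn {f : Trunc m 3 → ℝ} (hf : ContDiffOn ℝ (⊤ : ℕ∞) f (truncDom m 3))
    {y : Trunc m 3} (hy : y ∈ truncDom m 3) : DifferentiableAt ℝ f y :=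
  ((hf y hy).contDiffAt (isOpen_truncDom.mem_nhds hy)).differentiableAt
    (by simp)

lemma contDiffOn_fderiv {f : Trunc m 3 → ℝ} (hf : ContDiffOn ℝ (⊤ : ℕ∞) f (truncDom m 3)) :
    ContDiffOn ℝ (⊤ : ℕ∞) (fderiv ℝ f) (truncDom m 3) :=
  hf.fderiv_of_isOpen isOpen_truncDom (le_of_eq rfl)

lemma diffAt_fderiv {f : Trunc m 3 → ℝ} (hf : ContDiffOn ℝ (⊤ : ℕ∞) f (truncDom m 3))
    {y : Trunc m 3} (hy : y ∈ truncDom m 3) : DifferentiableAt ℝ (fderiv ℝ f) y :=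
  (((contDiffOn_fderiv hf) y hy).contDiffAt (isOpen_truncDom.mem_nhds hy)).differentiableAt
    (by simp)

lemma fD_eq_fderiv {f : Trunc m 3 → ℝ} (hf : ContDiffOn ℝ (⊤ : ℕ∞) f (truncDom m 3))
    {y : Trunc m 3} (hy : y ∈ truncDom m 3) (w : Trunc m 3) :
    fD f w y = fderiv ℝ f y w := by
  have hF : HasFDerivAt f (fderiv ℝ f y) (y + (0:ℝ) • w) := by
    simpa using (diffAt_of_contDiffOn hf hy).hasFDerivAt
  have := hF.comp_hasDerivAt 0 (hasDerivAt_line y w 0)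
  rw [fD]
  simpa [Function.comp_def] using this.deriv

lemma hasDerivAt_fD_line {f : Trunc m 3 → ℝ} (hf : ContDiffOn ℝ (⊤ : ℕ∞) f (truncDom m 3))
    {y : Trunc m 3} (hy : y ∈ truncDom m 3) (w w' : Trunc m 3)
    (hline : ∀ t : ℝ, y + t • w' ∈ truncDom m 3) :
    HasDerivAt (fun t : ℝ => fD f w (y + t • w'))
      ((fderiv ℝ (fderiv ℝ f) y w') w) 0 := by
  have hG : HasFDerivAt (fderiv ℝ f) (fderiv ℝ (fderiv ℝ f) y) (y + (0:ℝ) • w') := by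
    simpa using (diffAt_fderiv hf hy).hasFDerivAt
  have h1 : HasDerivAt (fun t : ℝ => fderiv ℝ f (y + t • w'))
      (fderiv ℝ (fderiv ℝ f) y w') 0 :=
    hG.comp_hasDerivAt 0 (hasDerivAt_line y w' 0)
  have h2 := ((ContinuousLinearMap.apply ℝ ℝ w).hasFDerivAt.comp_hasDerivAt 0 h1)
  have heq : (fun t : ℝ => fD f w (y + t • w'))
      = fun t : ℝ => (fderiv ℝ f (y + t • w')) w := by
    funext t
    exact fD_eq_fderiv hf (hline t) w
  rw [heq]
  simpa [Function.comp_def] using h2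

lemma pd_pd_eq {F : Jet m → ℝ} {f : Trunc m 3 → ℝ}
    (hF : ∀ z, F z = f (truncProj m 3 z)) (hf : ContDiffOn ℝ (⊤ : ℕ∞) f (truncDom m 3))
    {z : Jet m} (hz : truncProj m 3 z ∈ truncDom m 3)
    (r s : Fin m) {L : MIdx m} (hL : 1 ≤ Multiset.card L) (p q : Fin m) (K : MIdx m) :
    pd r s L (pd p q K F) z
      = (fderiv ℝ (fderiv ℝ f) (truncProj m 3 z) (dirW r s L)) (dirW p q K) := by
  have hline : ∀ t : ℝ, truncProj m 3 z + t • dirW r s L ∈ truncDom m 3 :=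
    fun t => line_mem_truncDom hz r s hL t
  have h0 : pd r s L (pd p q K F) z
      = deriv (fun t : ℝ => fD f (dirW p q K) (truncProj m 3 z + t • dirW r s L)) 0 := by
    rw [pd_eq_deriv]
    congr 1
    funext t
    rw [pd_comp hF, truncProj_zt]
  rw [h0]
  exact (hasDerivAt_fD_line hf hz _ _ hline).deriv

lemma pd_comm {F : Jet m → ℝ} {f : Trunc m 3 → ℝ}
    (hF : ∀ z, F z = f (truncProj m 3 z)) (hf : ContDiffOn ℝ (⊤ : ℕ∞) f (truncDom m 3))
    {z : Jet m} (hz : truncProj m 3 z ∈ truncDom m 3)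
    (r s : Fin m) {L : MIdx m} (hL : 1 ≤ Multiset.card L)
    (p q : Fin m) {K : MIdx m} (hK : 1 ≤ Multiset.card K) :
    pd r s L (pd p q K F) z = pd p q K (pd r s L F) z := by
  rw [pd_pd_eq hF hf hz r s hL p q K, pd_pd_eq hF hf hz p q hK r s L]
  exact second_derivative_symmetric_of_eventually
    (by filter_upwards [isOpen_truncDom.mem_nhds hz] with u hu
        exact (diffAt_of_contDiffOn hf hu).hasFDerivAt)
    (diffAt_fderiv hf hz).hasFDerivAt _ _

end Smooth

section Count

variable {m : ℕ}

noncomputable def permList (M : Multiset (Fin m)) : Finset (List (Fin m)) :=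
  M.toList.permutations.toFinset

lemma mem_permList {M : Multiset (Fin m)} {l : List (Fin m)} :
    l ∈ permList M ↔ (l : Multiset (Fin m)) = M := by
  rw [permList, List.mem_toFinset, List.mem_permutations]
  constructor
  · intro h
    rw [← Multiset.coe_toList M]
    exact Multiset.coe_eq_coe.mpr h
  · intro h
    apply Multiset.coe_eq_coe.mp
    rw [h, Multiset.coe_toList]

lemma prod_count_erase {M : Multiset (Fin m)} {j : Fin m} (hj : j ∈ M) :
    ∏ s ∈ M.toFinset, ((M.count s).factorial : ℝ)
      = (M.count j : ℝ) *
        ∏ s ∈ (M.erase j).toFinset, (((M.erase j).count s).factorial : ℝ) := by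
  have hsub : (M.erase j).toFinset ⊆ M.toFinset := by
    intro s hs
    rw [Multiset.mem_toFinset] at *
    exact Multiset.mem_of_mem_erase hs
  have hext : ∏ s ∈ (M.erase j).toFinset, (((M.erase j).count s).factorial : ℝ)
      = ∏ s ∈ M.toFinset, (((M.erase j).count s).factorial : ℝ) := by
    refine Finset.prod_subset hsub ?_
    intro s _ hs
    have h0 : (M.erase j).count s = 0 :=
      Multiset.count_eq_zero.mpr (fun hmem => hs (Multiset.mem_toFinset.mpr hmem))
    rw [h0]
    simp
  have hjF : j ∈ M.toFinset := Multiset.mem_toFinset.mpr hj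
  have hP : ∏ s ∈ M.toFinset.erase j, (((M.erase j).count s).factorial : ℝ)
      = ∏ s ∈ M.toFinset.erase j, ((M.count s).factorial : ℝ) := by
    refine Finset.prod_congr rfl (fun s hs => ?_)
    rw [Multiset.count_erase_of_ne (Finset.ne_of_mem_erase hs)]
  have h1 : 0 < M.count j := Multiset.count_pos.mpr hj
  rw [hext, ← Finset.mul_prod_erase _ _ hjF, ← Finset.mul_prod_erase _ _ hjF, hP,
    Multiset.count_erase_self, ← mul_assoc]
  congr 1
  rw_mod_cast [Nat.mul_factorial_pred h1.ne']

lemma permList_zero : permList (0 : Multiset (Fin m)) = {[]} := by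
  ext l
  simp [mem_permList]

lemma permList_card (M : Multiset (Fin m)) :
    ((permList M).card : ℝ) * ∏ s ∈ M.toFinset, ((M.count s).factorial : ℝ)
      = ((Multiset.card M).factorial : ℝ) := by
  induction M using Multiset.strongInductionOn with
  | _ M ih =>
    rcases eq_or_ne M 0 with h0 | h0
    · subst h0
      simp [permList_zero]
    · have hdecomp : permList M
          = M.toFinset.biUnion (fun j => (permList (M.erase j)).image (List.cons j)) := by
        ext l
        simp only [Finset.mem_biUnion, Finset.mem_image, mem_permList, Multiset.mem_toFinset]
        constructor
        · intro hl
          match l with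
          | [] => exact absurd hl.symm (by simpa using h0)
          | a :: l' =>
            have hA : a ::ₘ (l' : Multiset (Fin m)) = M := by
              rw [← hl]; rfl
            have ha : a ∈ M := by rw [← hA]; exact Multiset.mem_cons_self _ _
            refine ⟨a, ha, l', ?_, rfl⟩
            rw [← hA, Multiset.erase_cons_head]
        · rintro ⟨j, hj, l', hl', rfl⟩
          show j ::ₘ (l' : Multiset (Fin m)) = M
          rw [hl', Multiset.cons_erase hj]
      have hdisj : ∀ j ∈ M.toFinset, ∀ j' ∈ M.toFinset, j ≠ j' →
          Disjoint ((permList (M.erase j)).image (List.cons j))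
            ((permList (M.erase j')).image (List.cons j')) := by
        intro j _ j' _ hne
        rw [Finset.disjoint_left]
        rintro l hl hl'
        simp only [Finset.mem_image] at hl hl'
        obtain ⟨u, _, hu⟩ := hl
        obtain ⟨v, _, hv⟩ := hl'
        rw [← hv] at hu
        exact hne (by injection hu)
      have hcard : (permList M).card
          = ∑ j ∈ M.toFinset, (permList (M.erase j)).card := by
        rw [hdecomp, Finset.card_biUnion hdisj]
        refine Finset.sum_congr rfl (fun j _ => ?_)
        exact Finset.card_image_of_injective _ (fun x y h => by injection h)
      rw [hcard]
      push_cast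
      rw [Finset.sum_mul]
      have hterm : ∀ j ∈ M.toFinset,
          ((permList (M.erase j)).card : ℝ) * ∏ s ∈ M.toFinset, ((M.count s).factorial : ℝ)
            = (M.count j : ℝ) * ((Multiset.card M - 1).factorial : ℝ) := by
        intro j hj
        have hjM : j ∈ M := Multiset.mem_toFinset.mp hj
        rw [prod_count_erase hjM]
        rw [show ((permList (M.erase j)).card : ℝ) * ((M.count j : ℝ) *
            ∏ s ∈ (M.erase j).toFinset, (((M.erase j).count s).factorial : ℝ))
          = (M.count j : ℝ) * (((permList (M.erase j)).card : ℝ) *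
            ∏ s ∈ (M.erase j).toFinset, (((M.erase j).count s).factorial : ℝ)) from by ring]
        rw [ih _ (Multiset.erase_lt.mpr hjM)]
        rw [Multiset.card_erase_of_mem hjM]
        rfl
      rw [Finset.sum_congr rfl hterm, ← Finset.sum_mul]
      have hsum : ∑ j ∈ M.toFinset, (M.count j : ℝ) = (Multiset.card M : ℝ) := by
        rw [← Multiset.toFinset_sum_count_eq M]
        push_cast
        rfl
      rw [hsum]
      have hpos : 0 < Multiset.card M := Multiset.card_pos.mpr h0
      rw [show ((Multiset.card M).factorial : ℝ)
          = (Multiset.card M : ℝ) * ((Multiset.card M - 1).factorial : ℝ) from by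
        rw_mod_cast [Nat.mul_factorial_pred hpos.ne']]

end Count

section SumLemmas

variable {m : ℕ}

/-- Finset of all lists over `Fin m` of length at most 3. -/
noncomputable def slist (m : ℕ) : Finset (List (Fin m)) :=
  Finset.univ.image (fun p : (Σ n : Fin 4, (Fin (n : ℕ) → Fin m)) => List.ofFn p.2)

lemma mem_slist {l : List (Fin m)} : l ∈ slist m ↔ l.length ≤ 3 := by
  constructor
  · intro hl
    obtain ⟨p, _, hp⟩ := Finset.mem_image.mp hl
    rw [← hp, List.length_ofFn]
    omega
  · intro hl
    refine Finset.mem_image.mpr ⟨⟨⟨l.length, by omega⟩, l.get⟩, Finset.mem_univ _, ?_⟩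
    exact List.ofFn_get l

lemma pairWt_swap₁ (p q c d : Fin m) : pairWt q p c d = pairWt p q c d := by
  rw [pairWt, pairWt, add_comm]
  exact congrArg (· / 2)
    (congrArg₂ (· + ·) (if_congr and_comm rfl rfl) (if_congr and_comm rfl rfl))

lemma pairWt_swap₂ (p q c d : Fin m) : pairWt p q d c = pairWt p q c d := by
  rw [pairWt, pairWt, add_comm]

lemma pd_swap (p q : Fin m) (I : MIdx m) (F : Jet m → ℝ) : pd q p I F = pd p q I F := by
  funext z
  rw [pd, pd]
  simp only [pairWt_swap₁]

lemma sum_ind (u v : Fin m) (X : Fin m → Fin m → ℝ) :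
    ∑ a : Fin m, ∑ b : Fin m, (if u = a ∧ v = b then X a b else 0) = X u v := by
  simp [ite_and, Finset.sum_ite_eq]

lemma pair_sum (p q : Fin m) (X : Fin m → Fin m → ℝ) :
    ∑ a : Fin m, ∑ b : Fin m, pairWt p q a b * X a b = (X p q + X q p) / 2 := by
  have h1 : ∀ a : Fin m, ∀ b : Fin m, pairWt p q a b * X a b
      = (if p = a ∧ q = b then X a b else 0) / 2 + (if q = a ∧ p = b then X a b else 0) / 2 := by
    intro a b
    rw [pairWt]
    have : (if p = b ∧ q = a then (1:ℝ) else 0) = (if q = a ∧ p = b then (1:ℝ) else 0) :=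
      if_congr and_comm rfl rfl
    rw [this]
    split_ifs <;> ring
  simp only [h1, Finset.sum_add_distrib, ← Finset.sum_div]
  rw [sum_ind p q X, sum_ind q p X]
  ring

lemma sum_count_four (m₁ m₂ m₃ m₄ : Fin m) (φ : Fin m → ℝ) :
    ∑ b : Fin m, ((({m₁} + {m₂} + {m₃} + {m₄} : MIdx m).count b : ℝ)) * φ b
      = φ m₁ + φ m₂ + φ m₃ + φ m₄ := by
  have h1 : ∀ b : Fin m, ((({m₁} + {m₂} + {m₃} + {m₄} : MIdx m).count b : ℝ)) * φ b
      = (if b = m₁ then φ b else 0) + (if b = m₂ then φ b else 0)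
        + (if b = m₃ then φ b else 0) + (if b = m₄ then φ b else 0) := by
    intro b
    simp only [Multiset.count_add, Multiset.count_singleton]
    push_cast
    split_ifs <;> ring
  simp only [h1, Finset.sum_add_distrib, Finset.sum_ite_eq']
  simp

/-- The key weighted-count evaluation. -/
lemma sum_slist_eval {K : MIdx m} (hK : Multiset.card K = 4) (j : Fin m) (φ : MIdx m → ℝ) :
    ∑ l ∈ slist m, idxWt K ((l : MIdx m) + {j}) * φ (l : MIdx m)
      = ((K.count j : ℝ) / 4) * φ (K - {j}) := by
  have hterm : ∀ l ∈ slist m, idxWt K ((l : MIdx m) + {j}) * φ (l : MIdx m)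
      = if K = (l : MIdx m) + {j} then
          ((∏ s ∈ K.toFinset, ((K.count s).factorial : ℝ)) / 24) * φ (K - {j}) else 0 := by
    intro l _
    rw [idxWt]
    by_cases h : K = (l : MIdx m) + {j}
    · rw [if_pos h, if_pos h]
      have hl : (l : MIdx m) = K - {j} := by rw [h, add_tsub_cancel_right]
      rw [hl, hK]
      norm_num [Nat.factorial]
    · rw [if_neg h, if_neg h, zero_mul]
  rw [Finset.sum_congr rfl hterm, ← Finset.sum_filter, Finset.sum_const, nsmul_eq_mul]
  by_cases hj : j ∈ K
  · have hfil : (slist m).filter (fun l : List (Fin m) => K = (l : MIdx m) + {j}) = permList (K - {j}) := by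
      ext l
      rw [Finset.mem_filter, mem_permList, mem_slist]
      constructor
      · rintro ⟨_, h⟩
        rw [h, add_tsub_cancel_right]
      · intro h
        have hle : ({j} : MIdx m) ≤ K := Multiset.singleton_le.mpr hj
        have hKl : K = (l : MIdx m) + {j} := by
          rw [h, tsub_add_cancel_of_le hle]
        constructor
        · have : Multiset.card (l : MIdx m) + 1 = 4 := by
            rw [← hK, hKl]
            simp
          rw [Multiset.coe_card] at this
          omega
        · exact hKl
    rw [hfil, Multiset.sub_singleton]
    have hcard3 : Multiset.card (K.erase j) = 3 := by
      rw [Multiset.card_erase_of_mem hj, hK]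
      rfl
    have h6 : ((permList (K.erase j)).card : ℝ)
        * ∏ s ∈ (K.erase j).toFinset, (((K.erase j).count s).factorial : ℝ) = 6 := by
      have h := permList_card (K.erase j)
      rw [hcard3] at h
      norm_num [Nat.factorial] at h
      exact h
    rw [prod_count_erase hj]
    linear_combination (φ (K.erase j) * (K.count j : ℝ) / 24) * h6
  · have hfil : (slist m).filter (fun l : List (Fin m) => K = (l : MIdx m) + {j}) = ∅ := by
      ext l
      simp only [Finset.mem_filter, Finset.notMem_empty, iff_false, not_and]
      intro _ h
      exact hj (by rw [h]; simp)
    have hcnt : K.count j = 0 := Multiset.count_eq_zero.mpr hj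
    rw [hfil, hcnt]
    simp

end SumLemmas

section MainComp

variable {m : ℕ}

lemma truncProj_zt_high {p q : Fin m} {K : MIdx m} (hK : 4 ≤ Multiset.card K)
    (z : Jet m) (t : ℝ) : truncProj m 3 (zt z p q K t) = truncProj m 3 z := by
  rw [truncProj_zt, dirW_eq_zero p q hK]
  simp

lemma F_zt_high {F : Jet m → ℝ} {f : Trunc m 3 → ℝ} (hF : ∀ z, F z = f (truncProj m 3 z))
    {p q : Fin m} {K : MIdx m} (hK : 4 ≤ Multiset.card K) (z : Jet m) (t : ℝ) :
    F (zt z p q K t) = F z := by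
  rw [hF, hF, truncProj_zt_high hK]

lemma pd_zt_high {F : Jet m → ℝ} {f : Trunc m 3 → ℝ} (hF : ∀ z, F z = f (truncProj m 3 z))
    (a' b' : Fin m) (I : MIdx m) {p q : Fin m} {K : MIdx m} (hK : 4 ≤ Multiset.card K)
    (z : Jet m) (t : ℝ) :
    pd a' b' I F (zt z p q K t) = pd a' b' I F z := by
  rw [pd_comp hF, pd_comp hF, truncProj_zt_high hK]

lemma xpd_zt_high {F : Jet m → ℝ} {f : Trunc m 3 → ℝ} (hF : ∀ z, F z = f (truncProj m 3 z))
    (i : Fin m) {p q : Fin m} {K : MIdx m} (hK : 4 ≤ Multiset.card K) (z : Jet m) (t : ℝ) :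
    xpd i F (zt z p q K t) = xpd i F z := by
  rw [xpd, xpd]
  congr 1
  funext s
  show F (Function.update z.1 i (z.1 i + s), (zt z p q K t).2) = _
  have h1 : (Function.update z.1 i (z.1 i + s), (zt z p q K t).2)
      = zt (Function.update z.1 i (z.1 i + s), z.2) p q K t := rfl
  rw [h1, F_zt_high hF hK]

lemma pd_zero_fun (a b : Fin m) (I : MIdx m) : pd a b I (fun _ => (0:ℝ)) = fun _ => 0 := by
  funext z
  rw [pd]
  simp

lemma Dt_zero_fun (i : Fin m) : Dt i (fun _ => (0:ℝ)) = fun _ => 0 := by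
  funext z
  rw [Dt, xpd]
  have h1 : ∀ l : List (Fin m), ∑ a : Fin m, ∑ b : Fin m,
      z.2 a b ((l : MIdx m) + {i}) * pd a b (l : MIdx m) (fun _ => (0:ℝ)) z = 0 := by
    intro l
    simp [pd_zero_fun]
  simp only [h1, tsum_zero, deriv_const]
  simp

lemma DtL_zero_fun (l : List (Fin m)) : DtL l (fun _ => (0:ℝ)) = fun _ => 0 := by
  induction l with
  | nil => rfl
  | cons a l ih =>
    show Dt a (DtL l fun _ => (0:ℝ)) = _
    rw [ih, Dt_zero_fun]

lemma deriv_affine (A B : ℝ) : deriv (fun t : ℝ => A + t * B) 0 = B :=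
  ((hasDerivAt_mul_const B).const_add A).deriv

/-- The main affine expansion of `Dt j F` along a fourth-order coordinate direction. -/
lemma Dt_zt_affine {F : Jet m → ℝ} {f : Trunc m 3 → ℝ}
    (hF : ∀ z, F z = f (truncProj m 3 z)) (j p q : Fin m) {K : MIdx m}
    (hK : 4 ≤ Multiset.card K) (z : Jet m) (t : ℝ) :
    Dt j F (zt z p q K t) = Dt j F z
      + t * ∑ l ∈ slist m, ∑ a' : Fin m, ∑ b' : Fin m,
          pairWt p q a' b' * idxWt K ((l : MIdx m) + {j}) * pd a' b' (l : MIdx m) F z := by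
  have hsupp : ∀ w : Jet m, ∀ l : List (Fin m), l ∉ slist m →
      (∑ a' : Fin m, ∑ b' : Fin m,
        w.2 a' b' ((l : MIdx m) + {j}) * pd a' b' (l : MIdx m) F w) = 0 := by
    intro w l hl
    have hlen : 4 ≤ Multiset.card (l : MIdx m) := by
      rw [Multiset.coe_card]
      have hnot : ¬ l.length ≤ 3 := fun h => hl (mem_slist.mpr h)
      omega
    refine Finset.sum_eq_zero (fun a' _ => Finset.sum_eq_zero (fun b' _ => ?_))
    rw [pd_vanish hF a' b' hlen]
    ring
  rw [Dt, Dt]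
  rw [tsum_eq_sum (hsupp (zt z p q K t)), tsum_eq_sum (hsupp z)]
  rw [xpd_zt_high hF j hK]
  have hterm : ∀ l ∈ slist m,
      (∑ a' : Fin m, ∑ b' : Fin m,
        (zt z p q K t).2 a' b' ((l : MIdx m) + {j}) * pd a' b' (l : MIdx m) F (zt z p q K t))
      = (∑ a' : Fin m, ∑ b' : Fin m,
          z.2 a' b' ((l : MIdx m) + {j}) * pd a' b' (l : MIdx m) F z)
        + t * ∑ a' : Fin m, ∑ b' : Fin m,
            pairWt p q a' b' * idxWt K ((l : MIdx m) + {j}) * pd a' b' (l : MIdx m) F z := by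
    intro l _
    rw [Finset.mul_sum, ← Finset.sum_add_distrib]
    refine Finset.sum_congr rfl (fun a' _ => ?_)
    rw [Finset.mul_sum, ← Finset.sum_add_distrib]
    refine Finset.sum_congr rfl (fun b' _ => ?_)
    rw [pd_zt_high hF a' b' _ hK]
    show (z.2 a' b' ((l : MIdx m) + {j}) + t * (pairWt p q a' b' * idxWt K ((l : MIdx m) + {j})))
        * pd a' b' (l : MIdx m) F z = _
    ring
  rw [Finset.sum_congr rfl hterm, Finset.sum_add_distrib, Finset.mul_sum]
  ring

end MainComp

section Div

variable {m : ℕ}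

lemma Bsum_eval {F : Jet m → ℝ} {f : Trunc m 3 → ℝ} (hF : ∀ z, F z = f (truncProj m 3 z))
    {K : MIdx m} (hK : Multiset.card K = 4) (j p q : Fin m) (z : Jet m) :
    ∑ l ∈ slist m, ∑ a' : Fin m, ∑ b' : Fin m,
        pairWt p q a' b' * idxWt K ((l : MIdx m) + {j}) * pd a' b' (l : MIdx m) F z
      = ((K.count j : ℝ) / 4) * pd p q (K - {j}) F z := by
  have hl : ∀ l ∈ slist m,
      (∑ a' : Fin m, ∑ b' : Fin m,
        pairWt p q a' b' * idxWt K ((l : MIdx m) + {j}) * pd a' b' (l : MIdx m) F z)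
      = idxWt K ((l : MIdx m) + {j}) * pd p q (l : MIdx m) F z := by
    intro l _
    have h1 : ∀ a' b' : Fin m,
        pairWt p q a' b' * idxWt K ((l : MIdx m) + {j}) * pd a' b' (l : MIdx m) F z
        = pairWt p q a' b' * (idxWt K ((l : MIdx m) + {j}) * pd a' b' (l : MIdx m) F z) := by
      intro a' b'; ring
    simp only [h1]
    rw [pair_sum p q (fun a' b' => idxWt K ((l : MIdx m) + {j}) * pd a' b' (l : MIdx m) F z)]
    rw [show pd q p (l : MIdx m) F = pd p q (l : MIdx m) F from pd_swap p q _ F]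
    ring
  rw [Finset.sum_congr rfl hl]
  exact sum_slist_eval hK j (fun M => pd p q M F z)

lemma hEL_expand {F : Jet m → ℝ} {f : Trunc m 3 → ℝ} (hF : ∀ z, F z = f (truncProj m 3 z))
    {I : MIdx m} (hI : Multiset.card I = 2) (a b : Fin m) (w : Jet m) :
    hEL a b I F w = pd a b I F w
      + ∑ j : Fin m, (-3 : ℝ) * Dt j (pd a b (I + {j}) F) w := by
  classical
  rw [hEL]
  set s₂ : Finset (List (Fin m)) :=
    insert ([] : List (Fin m)) (Finset.univ.image fun j : Fin m => ([j] : List (Fin m))) with hs₂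
  have hsupp : ∀ J : List (Fin m), J ∉ s₂ →
      ((Nat.choose (Multiset.card I + J.length) (Multiset.card I) : ℝ) * (-1 : ℝ) ^ J.length *
        DtL J (pd a b (I + (J : MIdx m)) F) w) = 0 := by
    intro J hJ
    have hlen : 2 ≤ J.length := by
      match J with
      | [] => exact absurd (Finset.mem_insert_self _ _) hJ
      | [x] =>
        exact absurd (Finset.mem_insert_of_mem
          (Finset.mem_image.mpr ⟨x, Finset.mem_univ _, rfl⟩)) hJ
      | x :: y :: r => simp
    have hzero : pd a b (I + (J : MIdx m)) F = fun _ => 0 := by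
      funext z'
      refine pd_vanish hF a b ?_ z'
      rw [Multiset.card_add, hI, Multiset.coe_card]
      omega
    rw [hzero, DtL_zero_fun]
    ring
  rw [tsum_eq_sum hsupp, hs₂, Finset.sum_insert (by simp)]
  rw [Finset.sum_image (fun x _ y _ h => by injection h)]
  have h0 : (Multiset.card I + ([] : List (Fin m)).length).choose (Multiset.card I) = 1 := by
    simp
  have hnil : ((([] : List (Fin m)) : MIdx m)) = 0 := rfl
  have hDtLnil : ∀ G : Jet m → ℝ, DtL ([] : List (Fin m)) G = G := fun G => rfl
  rw [h0, hDtLnil, hnil, add_zero]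
  push_cast
  rw [show ∀ x : ℝ, 1 * (-1:ℝ)^(([]:List (Fin m)).length) * x = x from by intro x; simp]
  congr 1
  refine Finset.sum_congr rfl fun j _ => ?_
  have hch : (Multiset.card I + ([j] : List (Fin m)).length).choose (Multiset.card I) = 3 := by
    rw [hI]
    rfl
  have hDtLs : DtL ([j] : List (Fin m)) (pd a b (I + ({j} : MIdx m)) F)
      = Dt j (pd a b (I + {j}) F) := rfl
  rw [hch, hDtLs]
  norm_num

lemma gMat_zt {K : MIdx m} (hK : 1 ≤ Multiset.card K) (p q : Fin m) (z : Jet m) (t : ℝ) :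
    gMat (zt z p q K t) = gMat z := by
  ext a b
  show z.2 a b 0 + t * (pairWt p q a b * idxWt K 0) = z.2 a b 0
  rw [idxWt_zero_right hK]
  ring

lemma zt_mem_JetDom {z : Jet m} (hz : z ∈ JetDom m) (p q : Fin m) {K : MIdx m}
    (hK : 1 ≤ Multiset.card K) (t : ℝ) : zt z p q K t ∈ JetDom m := by
  refine ⟨?_, ?_⟩
  · intro c d J
    show z.2 c d J + t * (pairWt p q c d * idxWt K J)
        = z.2 d c J + t * (pairWt p q d c * idxWt K J)
    rw [hz.1 c d J, pairWt_swap₂]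
  · rw [gMat_zt hK]
    exact hz.2

lemma Gamma_zt {K : MIdx m} (hK : 4 ≤ Multiset.card K) (a b c p q : Fin m) (z : Jet m) (t : ℝ) :
    Gamma a b c (zt z p q K t) = Gamma a b c z := by
  have hK1 : 1 ≤ Multiset.card K := by omega
  have h1 : ∀ u v w : Fin m, (zt z p q K t).2 u v ({w} : MIdx m) = z.2 u v {w} := by
    intro u v w
    show z.2 u v {w} + t * (pairWt p q u v * idxWt K {w}) = z.2 u v {w}
    rw [idxWt_eq_zero_of_card_ne (by rw [Multiset.card_singleton]; omega)]
    ring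
  rw [Gamma, Gamma, ginv, ginv, gMat_zt hK1]
  refine congrArg _ (Finset.sum_congr rfl fun d _ => ?_)
  rw [h1, h1, h1]

lemma divA (S : SourceForm m 3) (hdiv : DivFree S) (a p q : Fin m) {K : MIdx m}
    (hK : Multiset.card K = 4) {z : Jet m} (hz : z ∈ JetDom m) :
    ∑ b : Fin m, ((K.count b : ℝ) / 4) * pd p q (K - {b}) (S.T a b) z = 0 := by
  choose fT hTs hTe using fun v => S.order a v
  have hK4 : 4 ≤ Multiset.card K := le_of_eq hK.symm
  have hK1 : 1 ≤ Multiset.card K := by omega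
  have hmain : ∀ t : ℝ,
      ((∑ b : Fin m, Dt b (S.T a b) z)
        + (∑ b : Fin m, ∑ c : Fin m, Gamma a b c z * S.T b c z))
      + t * ∑ b : Fin m, (∑ l ∈ slist m, ∑ a' : Fin m, ∑ b' : Fin m,
          pairWt p q a' b' * idxWt K ((l : MIdx m) + {b}) * pd a' b' (l : MIdx m) (S.T a b) z)
      = 0 := by
    intro t
    have hd := hdiv a _ (zt_mem_JetDom hz p q hK1 t)
    have h1 : ∀ b : Fin m, Dt b (S.T a b) (zt z p q K t)
        = Dt b (S.T a b) z + t * (∑ l ∈ slist m, ∑ a' : Fin m, ∑ b' : Fin m,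
            pairWt p q a' b' * idxWt K ((l : MIdx m) + {b}) * pd a' b' (l : MIdx m) (S.T a b) z) :=
      fun b => Dt_zt_affine (hTe b) b p q hK4 z t
    have h2 : ∀ b c : Fin m, Gamma a b c (zt z p q K t) * S.T b c (zt z p q K t)
        = Gamma a b c z * S.T b c z := by
      intro b c
      obtain ⟨g, _, hg⟩ := S.order b c
      rw [Gamma_zt hK4, F_zt_high hg hK4]
    simp only [h1, h2] at hd
    rw [Finset.sum_add_distrib, ← Finset.mul_sum] at hd
    linarith [hd]
  have h0 := hmain 0
  have h1 := hmain 1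
  have hB : ∑ b : Fin m, (∑ l ∈ slist m, ∑ a' : Fin m, ∑ b' : Fin m,
      pairWt p q a' b' * idxWt K ((l : MIdx m) + {b}) * pd a' b' (l : MIdx m) (S.T a b) z)
      = 0 := by linarith
  rw [← hB]
  refine Finset.sum_congr rfl fun b _ => ?_
  exact (Bsum_eval (hTe b) hK b p q z).symm

set_option maxHeartbeats 1000000 in
lemma divB {m : ℕ} (S : SourceForm m 3) (hdiv : DivFree S) (a p q r s : Fin m) {K : MIdx m}
    (hK : Multiset.card K = 4) {L : MIdx m} (hL : 1 ≤ Multiset.card L) {z : Jet m}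
    (hz : z ∈ JetDom m) :
    ∑ b : Fin m, ((K.count b : ℝ) / 4) * pd r s L (pd p q (K - {b}) (S.T a b)) z = 0 := by
  choose fT hTs hTe using fun v => S.order a v
  have hy : truncProj m 3 z ∈ truncDom m 3 := truncProj_mem hz
  have hline : ∀ t : ℝ, truncProj m 3 z + t • dirW r s L ∈ truncDom m 3 :=
    fun t => line_mem_truncDom hy r s hL t
  have hψ : ∀ t : ℝ, ∑ b : Fin m, ((K.count b : ℝ) / 4) *
      fD (fT b) (dirW p q (K - {b})) (truncProj m 3 z + t • dirW r s L) = 0 := by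
    intro t
    have hA := divA S hdiv a p q hK (zt_mem_JetDom hz r s hL t)
    rw [← hA]
    refine Finset.sum_congr rfl fun b _ => ?_
    rw [pd_comp (hTe b), truncProj_zt]
  have hone : ∀ b : Fin m, HasDerivAt (fun t : ℝ => fD (fT b) (dirW p q (K - {b}))
        (truncProj m 3 z + t • dirW r s L))
      ((fderiv ℝ (fderiv ℝ (fT b)) (truncProj m 3 z) (dirW r s L)) (dirW p q (K - {b}))) 0 :=
    fun b => hasDerivAt_fD_line (hTs b) hy _ _ hline
  have hD : HasDerivAt (fun t : ℝ => ∑ b : Fin m, ((K.count b : ℝ) / 4) *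
      fD (fT b) (dirW p q (K - {b})) (truncProj m 3 z + t • dirW r s L))
      (∑ b : Fin m, ((K.count b : ℝ) / 4) *
        ((fderiv ℝ (fderiv ℝ (fT b)) (truncProj m 3 z) (dirW r s L)) (dirW p q (K - {b})))) 0 :=
    HasDerivAt.fun_sum fun b _ => (hone b).const_mul _
  have hfun : (fun t : ℝ => ∑ b : Fin m, ((K.count b : ℝ) / 4) *
      fD (fT b) (dirW p q (K - {b})) (truncProj m 3 z + t • dirW r s L)) = fun _ => (0:ℝ) :=
    funext hψ
  rw [hfun] at hD
  have hzero := hD.unique (hasDerivAt_const 0 0)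
  rw [← hzero]
  refine Finset.sum_congr rfl fun b _ => ?_
  rw [pd_pd_eq (hTe b) (hTs b) hy r s hL p q (K - {b})]

lemma star (S : SourceForm m 3) (hdiv : DivFree S) (a p q r s m₁ m₂ m₃ m₄ : Fin m)
    {L : MIdx m} (hL : 1 ≤ Multiset.card L) {z : Jet m} (hz : z ∈ JetDom m) :
    pd r s L (pd p q ({m₂} + {m₃} + {m₄}) (S.T a m₁)) z
      + pd r s L (pd p q ({m₁} + {m₃} + {m₄}) (S.T a m₂)) z
      + pd r s L (pd p q ({m₁} + {m₂} + {m₄}) (S.T a m₃)) z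
      + pd r s L (pd p q ({m₁} + {m₂} + {m₃}) (S.T a m₄)) z = 0 := by
  set M : MIdx m := {m₁} + {m₂} + {m₃} + {m₄} with hM
  have hK : Multiset.card M = 4 := by simp [hM]
  have h := divB S hdiv a p q r s hK hL hz
  have e1 : M - {m₁} = {m₂} + {m₃} + {m₄} := by
    rw [show M = {m₁} + ({m₂} + {m₃} + {m₄}) from by rw [hM]; abel, add_tsub_cancel_left]
  have e2 : M - {m₂} = {m₁} + {m₃} + {m₄} := by
    rw [show M = {m₂} + ({m₁} + {m₃} + {m₄}) from by rw [hM]; abel, add_tsub_cancel_left]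
  have e3 : M - {m₃} = {m₁} + {m₂} + {m₄} := by
    rw [show M = {m₃} + ({m₁} + {m₂} + {m₄}) from by rw [hM]; abel, add_tsub_cancel_left]
  have e4 : M - {m₄} = {m₁} + {m₂} + {m₃} := by
    rw [show M = {m₄} + ({m₁} + {m₂} + {m₃}) from by rw [hM]; abel, add_tsub_cancel_left]
  have hconv : ∑ b : Fin m, ((M.count b : ℝ)) *
      ((1/4) * pd r s L (pd p q (M - {b}) (S.T a b)) z)
      = (1/4) * pd r s L (pd p q (M - {m₁}) (S.T a m₁)) z
        + (1/4) * pd r s L (pd p q (M - {m₂}) (S.T a m₂)) z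
        + (1/4) * pd r s L (pd p q (M - {m₃}) (S.T a m₃)) z
        + (1/4) * pd r s L (pd p q (M - {m₄}) (S.T a m₄)) z := by
    rw [hM]
    exact sum_count_four m₁ m₂ m₃ m₄
      (fun b => (1/4) * pd r s L (pd p q (({m₁} + {m₂} + {m₃} + {m₄} : MIdx m) - {b}) (S.T a b)) z)
  have hsum : ∑ b : Fin m, ((M.count b : ℝ)) *
      ((1/4) * pd r s L (pd p q (M - {b}) (S.T a b)) z) = 0 := by
    rw [← h]
    refine Finset.sum_congr rfl fun b _ => ?_
    ring
  rw [hsum, e1, e2, e3, e4] at hconv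
  linarith [hconv]

end Div

section Final

variable {m : ℕ}

lemma pd_Helm_eval (S : SourceForm m 3) (a b c₁ c₂ d₁ d₂ : Fin m) {K : MIdx m}
    (hK : Multiset.card K = 4) {I : MIdx m} (hI : Multiset.card I = 2) (z : Jet m) :
    pd d₁ d₂ K (Helm S.T a b c₁ c₂ I) z
      = 3 * ∑ j : Fin m, ((K.count j : ℝ) / 4) *
          pd d₁ d₂ (K - {j}) (pd a b (I + {j}) (S.T c₁ c₂)) z := by
  obtain ⟨fab, _, hfab⟩ := S.order a b
  obtain ⟨fcd, _, hfcd⟩ := S.order c₁ c₂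
  have hK4 : 4 ≤ Multiset.card K := le_of_eq hK.symm
  have hGj : ∀ j : Fin m, ∀ w : Jet m, pd a b (I + {j}) (S.T c₁ c₂) w
      = fD fcd (dirW a b (I + {j})) (truncProj m 3 w) := fun j w => pd_comp hfcd a b _ w
  have h1 : ∀ t : ℝ, Helm S.T a b c₁ c₂ I (zt z d₁ d₂ K t)
      = Helm S.T a b c₁ c₂ I z
        + t * (3 * ∑ j : Fin m, ((K.count j : ℝ) / 4) *
            pd d₁ d₂ (K - {j}) (pd a b (I + {j}) (S.T c₁ c₂)) z) := by
    intro t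
    have e1 : pd c₁ c₂ I (S.T a b) (zt z d₁ d₂ K t) = pd c₁ c₂ I (S.T a b) z :=
      pd_zt_high hfab c₁ c₂ I hK4 z t
    have e2 : pd a b I (S.T c₁ c₂) (zt z d₁ d₂ K t) = pd a b I (S.T c₁ c₂) z :=
      pd_zt_high hfcd a b I hK4 z t
    have e3 : ∀ j : Fin m, Dt j (pd a b (I + {j}) (S.T c₁ c₂)) (zt z d₁ d₂ K t)
        = Dt j (pd a b (I + {j}) (S.T c₁ c₂)) z
          + t * (((K.count j : ℝ) / 4)
              * pd d₁ d₂ (K - {j}) (pd a b (I + {j}) (S.T c₁ c₂)) z) := by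
      intro j
      rw [Dt_zt_affine (hGj j) j d₁ d₂ hK4 z t, Bsum_eval (hGj j) hK j d₁ d₂ z]
    simp only [Helm]
    rw [hEL_expand hfcd hI a b (zt z d₁ d₂ K t), hEL_expand hfcd hI a b z, hI]
    rw [e1, e2]
    have hs : ∑ j : Fin m, (-3 : ℝ) * Dt j (pd a b (I + {j}) (S.T c₁ c₂)) (zt z d₁ d₂ K t)
        = (∑ j : Fin m, (-3 : ℝ) * Dt j (pd a b (I + {j}) (S.T c₁ c₂)) z)
          + (-3) * t * ∑ j : Fin m, ((K.count j : ℝ) / 4)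
              * pd d₁ d₂ (K - {j}) (pd a b (I + {j}) (S.T c₁ c₂)) z := by
      simp only [e3]
      rw [Finset.mul_sum, ← Finset.sum_add_distrib]
      refine Finset.sum_congr rfl fun j _ => ?_
      ring
    rw [hs]
    ring
  rw [pd_eq_deriv]
  rw [show (fun t : ℝ => Helm S.T a b c₁ c₂ I (zt z d₁ d₂ K t))
      = fun t : ℝ => Helm S.T a b c₁ c₂ I z
        + t * (3 * ∑ j : Fin m, ((K.count j : ℝ) / 4) *
            pd d₁ d₂ (K - {j}) (pd a b (I + {j}) (S.T c₁ c₂)) z) from funext h1]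
  rw [deriv_affine]

/-- The four-fold symmetrized double derivative. -/
noncomputable def Sq (T : Fin m → Fin m → Jet m → ℝ) (d₁ d₂ a b j₁ j₂ j₃ j₄ : Fin m)
    (z : Jet m) (p q u v : Fin m) : ℝ :=
  pd d₁ d₂ ({j₂} + {j₃} + {j₄}) (pd a b ({p} + {q} + {j₁}) (T u v)) z
  + pd d₁ d₂ ({j₁} + {j₃} + {j₄}) (pd a b ({p} + {q} + {j₂}) (T u v)) z
  + pd d₁ d₂ ({j₁} + {j₂} + {j₄}) (pd a b ({p} + {q} + {j₃}) (T u v)) z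
  + pd d₁ d₂ ({j₁} + {j₂} + {j₃}) (pd a b ({p} + {q} + {j₄}) (T u v)) z

lemma Sq_symm1 (T : Fin m → Fin m → Jet m → ℝ) (d₁ d₂ a b j₁ j₂ j₃ j₄ : Fin m)
    (z : Jet m) (p q u v : Fin m) :
    Sq T d₁ d₂ a b j₁ j₂ j₃ j₄ z p q u v = Sq T d₁ d₂ a b j₁ j₂ j₃ j₄ z q p u v := by
  unfold Sq
  rw [show ({p} + {q} : MIdx m) = {q} + {p} from add_comm _ _]

lemma Sq_symm2 (T : Fin m → Fin m → Jet m → ℝ) (d₁ d₂ a b j₁ j₂ j₃ j₄ : Fin m)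
    (z : Jet m) (p q u v : Fin m) (hT : T u v = T v u) :
    Sq T d₁ d₂ a b j₁ j₂ j₃ j₄ z p q u v = Sq T d₁ d₂ a b j₁ j₂ j₃ j₄ z p q v u := by
  unfold Sq
  rw [hT]

lemma Sq_R (S : SourceForm m 3) (hdiv : DivFree S) (d₁ d₂ a b j₁ j₂ j₃ j₄ : Fin m)
    {z : Jet m} (hz : z ∈ JetDom m) (u m₁ m₂ m₃ : Fin m) :
    Sq S.T d₁ d₂ a b j₁ j₂ j₃ j₄ z m₂ m₃ u m₁
      + Sq S.T d₁ d₂ a b j₁ j₂ j₃ j₄ z m₁ m₃ u m₂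
      + Sq S.T d₁ d₂ a b j₁ j₂ j₃ j₄ z m₁ m₂ u m₃ = 0 := by
  have hy := truncProj_mem hz
  have hc3 : ∀ x y w : Fin m, (1 : ℕ) ≤ Multiset.card ({x} + {y} + {w} : MIdx m) := by
    intro x y w; simp
  have hU0 := star S hdiv u d₁ d₂ a b j₁ j₂ j₃ j₄ (hc3 m₁ m₂ m₃) hz
  have hcomm : ∀ (N N' : MIdx m) (jk : Fin m), (1 ≤ Multiset.card N) → (1 ≤ Multiset.card N') →
      pd a b N (pd d₁ d₂ N' (S.T u jk)) z = pd d₁ d₂ N' (pd a b N (S.T u jk)) z := by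
    intro N N' jk hN hN'
    obtain ⟨f, hfs, hfe⟩ := S.order u jk
    exact pd_comm hfe hfs hy a b hN d₁ d₂ hN'
  rw [hcomm _ _ _ (hc3 m₁ m₂ m₃) (hc3 j₂ j₃ j₄), hcomm _ _ _ (hc3 m₁ m₂ m₃) (hc3 j₁ j₃ j₄),
    hcomm _ _ _ (hc3 m₁ m₂ m₃) (hc3 j₁ j₂ j₄), hcomm _ _ _ (hc3 m₁ m₂ m₃) (hc3 j₁ j₂ j₃)] at hU0
  have h1 := star S hdiv u a b d₁ d₂ m₁ m₂ m₃ j₁ (hc3 j₂ j₃ j₄) hz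
  have h2 := star S hdiv u a b d₁ d₂ m₁ m₂ m₃ j₂ (hc3 j₁ j₃ j₄) hz
  have h3 := star S hdiv u a b d₁ d₂ m₁ m₂ m₃ j₃ (hc3 j₁ j₂ j₄) hz
  have h4 := star S hdiv u a b d₁ d₂ m₁ m₂ m₃ j₄ (hc3 j₁ j₂ j₃) hz
  simp only [Sq]
  linarith [hU0, h1, h2, h3, h4]

lemma pair_exchange (Sq' : Fin m → Fin m → Fin m → Fin m → ℝ)
    (h1 : ∀ p q u v, Sq' p q u v = Sq' q p u v)
    (h2 : ∀ p q u v, Sq' p q u v = Sq' p q v u)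
    (hR : ∀ u m₁ m₂ m₃, Sq' m₂ m₃ u m₁ + Sq' m₁ m₃ u m₂ + Sq' m₁ m₂ u m₃ = 0)
    (p q u v : Fin m) : Sq' p q u v = Sq' u v p q := by
  have hA := hR u v p q
  have hB := hR p q u v
  have hC := hR q u v p
  have hD := hR v p q u
  have e1 : Sq' v q u p = Sq' q v p u := (h1 v q u p).trans (h2 q v u p)
  have e2 : Sq' u p q v = Sq' p u v q := (h1 u p q v).trans (h2 p u q v)
  have e3 : Sq' v p q u = Sq' v p u q := h2 v p q u
  have e4 : Sq' q u v p = Sq' q u p v := h2 q u v p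
  have e5 : Sq' u v q p = Sq' u v p q := h2 u v q p
  have e6 : Sq' p q v u = Sq' p q u v := h2 p q v u
  linarith [hA, hB, hC, hD, e1, e2, e3, e4, e5, e6]

end Final

/-- For a third order divergence-free source form,
`∂^{d₁d₂,j₁j₂j₃j₄} H^{ab;c₁c₂,i₁i₂}
  = 3 Sym_{(j₁,j₂,j₃,j₄)} ∂^{d₁d₂,j₂j₃j₄} ∂^{ab,c₁c₂j₁} T^{i₁i₂}`;
since `∂^{d₁d₂,J}` is symmetric in `J`, the symmetrization reduces to the displayed
four-term average. -/
theorem stmt17 {m : ℕ} (S : SourceForm m 3) (hdiv : DivFree S) :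
    ∀ a b c₁ c₂ d₁ d₂ i₁ i₂ j₁ j₂ j₃ j₄ : Fin m, ∀ z ∈ JetDom m,
      pd d₁ d₂ ({j₁} + {j₂} + {j₃} + {j₄}) (Helm S.T a b c₁ c₂ ({i₁} + {i₂})) z
      = 3 * ((pd d₁ d₂ ({j₂} + {j₃} + {j₄}) (pd a b ({c₁} + {c₂} + {j₁}) (S.T i₁ i₂)) z
          + pd d₁ d₂ ({j₁} + {j₃} + {j₄}) (pd a b ({c₁} + {c₂} + {j₂}) (S.T i₁ i₂)) z
          + pd d₁ d₂ ({j₁} + {j₂} + {j₄}) (pd a b ({c₁} + {c₂} + {j₃}) (S.T i₁ i₂)) z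
          + pd d₁ d₂ ({j₁} + {j₂} + {j₃}) (pd a b ({c₁} + {c₂} + {j₄}) (S.T i₁ i₂)) z) / 4) := by
  intro a b c₁ c₂ d₁ d₂ i₁ i₂ j₁ j₂ j₃ j₄ z hz
  have hK : Multiset.card ({j₁} + {j₂} + {j₃} + {j₄} : MIdx m) = 4 := by simp
  have hI : Multiset.card ({i₁} + {i₂} : MIdx m) = 2 := by simp
  rw [pd_Helm_eval S a b c₁ c₂ d₁ d₂ hK hI z]
  have e1 : ({j₁} + {j₂} + {j₃} + {j₄} : MIdx m) - {j₁} = {j₂} + {j₃} + {j₄} := by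
    rw [show ({j₁} + {j₂} + {j₃} + {j₄} : MIdx m) = {j₁} + ({j₂} + {j₃} + {j₄}) from by abel,
      add_tsub_cancel_left]
  have e2 : ({j₁} + {j₂} + {j₃} + {j₄} : MIdx m) - {j₂} = {j₁} + {j₃} + {j₄} := by
    rw [show ({j₁} + {j₂} + {j₃} + {j₄} : MIdx m) = {j₂} + ({j₁} + {j₃} + {j₄}) from by abel,
      add_tsub_cancel_left]
  have e3 : ({j₁} + {j₂} + {j₃} + {j₄} : MIdx m) - {j₃} = {j₁} + {j₂} + {j₄} := by
    rw [show ({j₁} + {j₂} + {j₃} + {j₄} : MIdx m) = {j₃} + ({j₁} + {j₂} + {j₄}) from by abel,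
      add_tsub_cancel_left]
  have e4 : ({j₁} + {j₂} + {j₃} + {j₄} : MIdx m) - {j₄} = {j₁} + {j₂} + {j₃} := by
    rw [show ({j₁} + {j₂} + {j₃} + {j₄} : MIdx m) = {j₄} + ({j₁} + {j₂} + {j₃}) from by abel,
      add_tsub_cancel_left]
  have h₂ : ∑ j : Fin m, ((({j₁} + {j₂} + {j₃} + {j₄} : MIdx m).count j : ℝ) / 4) *
        pd d₁ d₂ (({j₁} + {j₂} + {j₃} + {j₄} : MIdx m) - {j})
          (pd a b ({i₁} + {i₂} + {j}) (S.T c₁ c₂)) z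
      = ∑ j : Fin m, ((({j₁} + {j₂} + {j₃} + {j₄} : MIdx m).count j : ℝ)) *
          ((1/4) * pd d₁ d₂ (({j₁} + {j₂} + {j₃} + {j₄} : MIdx m) - {j})
            (pd a b ({i₁} + {i₂} + {j}) (S.T c₁ c₂)) z) :=
    Finset.sum_congr rfl fun j _ => by ring
  have h₁ : ∑ j : Fin m, ((({j₁} + {j₂} + {j₃} + {j₄} : MIdx m).count j : ℝ)) *
        ((1/4) * pd d₁ d₂ (({j₁} + {j₂} + {j₃} + {j₄} : MIdx m) - {j})
          (pd a b ({i₁} + {i₂} + {j}) (S.T c₁ c₂)) z)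
      = (1/4) * pd d₁ d₂ (({j₁} + {j₂} + {j₃} + {j₄} : MIdx m) - {j₁})
          (pd a b ({i₁} + {i₂} + {j₁}) (S.T c₁ c₂)) z
        + (1/4) * pd d₁ d₂ (({j₁} + {j₂} + {j₃} + {j₄} : MIdx m) - {j₂})
            (pd a b ({i₁} + {i₂} + {j₂}) (S.T c₁ c₂)) z
        + (1/4) * pd d₁ d₂ (({j₁} + {j₂} + {j₃} + {j₄} : MIdx m) - {j₃})
            (pd a b ({i₁} + {i₂} + {j₃}) (S.T c₁ c₂)) z
        + (1/4) * pd d₁ d₂ (({j₁} + {j₂} + {j₃} + {j₄} : MIdx m) - {j₄})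
            (pd a b ({i₁} + {i₂} + {j₄}) (S.T c₁ c₂)) z :=
    sum_count_four j₁ j₂ j₃ j₄ (fun j => (1/4) *
      pd d₁ d₂ (({j₁} + {j₂} + {j₃} + {j₄} : MIdx m) - {j})
        (pd a b ({i₁} + {i₂} + {j}) (S.T c₁ c₂)) z)
  rw [h₂, h₁, e1, e2, e3, e4]
  have hsymm1 := fun p q u v => Sq_symm1 S.T d₁ d₂ a b j₁ j₂ j₃ j₄ z p q u v
  have hsymm2 : ∀ p q u v : Fin m, Sq S.T d₁ d₂ a b j₁ j₂ j₃ j₄ z p q u v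
      = Sq S.T d₁ d₂ a b j₁ j₂ j₃ j₄ z p q v u :=
    fun p q u v => Sq_symm2 S.T d₁ d₂ a b j₁ j₂ j₃ j₄ z p q u v (S.symm u v)
  have hR := fun u m₁ m₂ m₃ => Sq_R S hdiv d₁ d₂ a b j₁ j₂ j₃ j₄ hz u m₁ m₂ m₃
  have hex := pair_exchange (Sq S.T d₁ d₂ a b j₁ j₂ j₃ j₄ z) hsymm1 hsymm2 hR i₁ i₂ c₁ c₂
  simp only [Sq] at hex
  linarith [hex]

end JetMetric
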